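/- Suppose a 4×4 Hermitian matrix M is anti-diagonal with unit-modulus entries M_{41} = δ_A and M_{32} = δ_B (and M_{14} = δ_A*, M_{23} = δ_B*). If M can be written as (σ⃗·ν⃗) ⊗ (σ⃗·τ⃗) with ν⃗ = (Re ν, Im ν, 0), τ⃗ = (Re t, Im t, 0) for unit complex ν, t, then necessarily δ_A/δ_B = t² and ν = t* δ_A. -/

import Mathlib

open Matrix Kronecker

noncomputable section

def σ0 : Matrix (Fin 2) (Fin 2) ℂ := 1
def σ1 : Matrix (Fin 2) (Fin 2) ℂ := !![0, 1; 1, 0]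
def σ2 : Matrix (Fin 2) (Fin 2) ℂ := !![0, -Complex.I; Complex.I, 0]
def σ3 : Matrix (Fin 2) (Fin 2) ℂ := !![1, 0; 0, -1]

/-- σ⃗·v for v ∈ ℝ³ -/
def pauliVec (v : Fin 3 → ℝ) : Matrix (Fin 2) (Fin 2) ℂ :=
  (v 0 : ℂ) • σ1 + (v 1 : ℂ) • σ2 + (v 2 : ℂ) • σ3

/-- m_η with tangent (t1,t2) -/
def mEta (t1 t2 η : ℝ) : Matrix (Fin 2) (Fin 2) ℂ :=
  (Real.cos η : ℂ) • ((t1 : ℂ) • σ1 + (t2 : ℂ) • σ2) + (Real.sin η : ℂ) • σ3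
/-- The anti-diagonal 4×4 matrix with entries M₁₄ = δA*, M₂₃ = δB*, M₃₂ = δB, M₄₁ = δA. -/
def antiDiag (δA δB : ℂ) : Matrix (Fin 2 × Fin 2) (Fin 2 × Fin 2) ℂ :=
  (!![0, 1; 0, 0] : Matrix (Fin 2) (Fin 2) ℂ) ⊗ₖ !![0, starRingEnd ℂ δA; starRingEnd ℂ δB, 0] +
  (!![0, 0; 1, 0] : Matrix (Fin 2) (Fin 2) ℂ) ⊗ₖ !![0, δB; δA, 0]

theorem armchair_matrix_necessary (δA δB ν t : ℂ) (hA : ‖δA‖ = 1)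
    (hB : ‖δB‖ = 1) (hν : ‖ν‖ = 1) (ht : ‖t‖ = 1)
    (h : antiDiag δA δB =
      pauliVec ![ν.re, ν.im, 0] ⊗ₖ pauliVec ![t.re, t.im, 0]) :
    δA / δB = t ^ 2 ∧ ν = starRingEnd ℂ t * δA := by
  have htc : t * starRingEnd ℂ t = 1 := by
    rw [Complex.mul_conj, Complex.normSq_eq_norm_sq, ht]; norm_num
  have hB0 : δB ≠ 0 := by
    intro h0; rw [h0] at hB; simp at hB
  have e1 := congr_fun (congr_fun h ((1 : Fin 2), (1 : Fin 2))) ((0 : Fin 2), (0 : Fin 2))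
  have e2 := congr_fun (congr_fun h ((1 : Fin 2), (0 : Fin 2))) ((0 : Fin 2), (1 : Fin 2))
  simp [antiDiag, pauliVec, σ1, σ2, σ3, Matrix.kroneckerMap_apply] at e1 e2
  -- e1 : δA = ν * t, e2 : δB = ν * conj t (in some re/im form)
  have h1 : δA = ν * t := by
    rw [e1, Complex.ext_iff]; constructor <;> simp [Complex.mul_re, Complex.mul_im] <;> ring
  have h2 : δB = ν * starRingEnd ℂ t := by
    rw [e2, Complex.ext_iff]
    constructor <;> simp [Complex.mul_re, Complex.mul_im, Complex.conj_re, Complex.conj_im] <;> ring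
  constructor
  · rw [div_eq_iff hB0, h1, h2]
    linear_combination (-(ν * t)) * htc
  · rw [h1]
    linear_combination (-ν) * htc
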